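/- arXiv:2504.20181 — 2 statements merged into one kernel-verified Lean document; each statement's English description precedes it below -/
import Mathlib

section
/- If u₁, u₂ are two solutions of u'' + V(t)u = 0 with Wronskian W = u₁u₂' - u₂u₁', then the function w(t) = √(a·u₁(t)² + 2b·u₁(t)u₂(t) + c·u₂(t)²), on any interval where the expression under the square root is positive, satisfies the Ermakov-Pinney equation w'' + V(t)w = w⁻³, provided ac - b² = W⁻². -/
/-- If `u₁, u₂` solve `u'' + V u = 0` with constant Wronskian `W ≠ 0` and
`a c - b² = W⁻²`, then `w = √(a u₁² + 2 b u₁ u₂ + c u₂²)` solves the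
Ermakov-Pinney equation `w'' + V w = w⁻³` wherever the radicand is positive. -/
theorem ermakov_pinney_from_hill_solutions
    (V u₁ u₂ : ℝ → ℝ) (W a b c : ℝ)
    (hV : Continuous V)
    (hu₁ : Differentiable ℝ u₁) (hu₁' : Differentiable ℝ (deriv u₁))
    (hu₂ : Differentiable ℝ u₂) (hu₂' : Differentiable ℝ (deriv u₂))
    (hode₁ : ∀ t, deriv (deriv u₁) t + V t * u₁ t = 0)
    (hode₂ : ∀ t, deriv (deriv u₂) t + V t * u₂ t = 0)
    (hW : ∀ t, u₁ t * deriv u₂ t - u₂ t * deriv u₁ t = W)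
    (hWne : W ≠ 0)
    (habc : a * c - b ^ 2 = W⁻¹ ^ 2)
    (I : Set ℝ) (hI : IsOpen I)
    (hpos : ∀ t ∈ I, 0 < a * u₁ t ^ 2 + 2 * b * u₁ t * u₂ t + c * u₂ t ^ 2)
    (w : ℝ → ℝ)
    (hw : ∀ t, w t = Real.sqrt (a * u₁ t ^ 2 + 2 * b * u₁ t * u₂ t + c * u₂ t ^ 2)) :
    ∀ t ∈ I, deriv (deriv w) t + V t * w t = (w t)⁻¹ ^ 3 := by
  intro t ht
  set q : ℝ → ℝ := fun s => a * u₁ s ^ 2 + 2 * b * u₁ s * u₂ s + c * u₂ s ^ 2 with hqdef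
  set q1 : ℝ → ℝ := fun s =>
    2 * (a * (u₁ s * deriv u₁ s) + b * (deriv u₁ s * u₂ s + u₁ s * deriv u₂ s)
      + c * (u₂ s * deriv u₂ s)) with hq1def
  have hq : ∀ s, HasDerivAt q (q1 s) s := by
    intro s
    have h1 : HasDerivAt u₁ (deriv u₁ s) s := (hu₁ s).hasDerivAt
    have h2 : HasDerivAt u₂ (deriv u₂ s) s := (hu₂ s).hasDerivAt
    have h := (((h1.pow 2).const_mul a).add ((h1.mul h2).const_mul (2 * b))).add
      ((h2.pow 2).const_mul c)
    rw [show q = (((fun y => a * (u₁ ^ 2) y) + fun y => 2 * b * (u₁ * u₂) y) + fun y => c * (u₂ ^ 2) y) by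
      funext s; simp [hqdef]; ring]
    refine h.congr_deriv ?_
    simp [hq1def]; ring
  have hwfun : w = fun s => Real.sqrt (q s) := funext hw
  -- first derivative of w on I
  set g : ℝ → ℝ := fun s => q1 s / (2 * Real.sqrt (q s)) with hgdef
  have hderivw : ∀ s ∈ I, HasDerivAt w (g s) s := by
    intro s hs
    have hqs : q s ≠ 0 := ne_of_gt (hpos s hs)
    have := (hq s).sqrt hqs
    rw [hwfun]
    exact this
  have hev : deriv w =ᶠ[nhds t] g := by
    filter_upwards [hI.mem_nhds ht] with s hs
    exact (hderivw s hs).deriv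
  have hdd : deriv (deriv w) t = deriv g t := hev.deriv_eq
  -- second derivatives via the ODE
  have h1 : HasDerivAt u₁ (deriv u₁ t) t := (hu₁ t).hasDerivAt
  have h2 : HasDerivAt u₂ (deriv u₂ t) t := (hu₂ t).hasDerivAt
  have hd1 : HasDerivAt (deriv u₁) (-(V t * u₁ t)) t := by
    have := (hu₁' t).hasDerivAt
    rwa [eq_neg_of_add_eq_zero_left (hode₁ t)] at this
  have hd2 : HasDerivAt (deriv u₂) (-(V t * u₂ t)) t := by
    have := (hu₂' t).hasDerivAt
    rwa [eq_neg_of_add_eq_zero_left (hode₂ t)] at this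
  set P : ℝ := a * deriv u₁ t ^ 2 + 2 * b * (deriv u₁ t * deriv u₂ t) + c * deriv u₂ t ^ 2 with hPdef
  have hN : HasDerivAt q1 (2 * (P - V t * q t)) t := by
    have h := ((((h1.mul hd1).const_mul a).add
      (((hd1.mul h2).add (h1.mul hd2)).const_mul b)).add
      ((h2.mul hd2).const_mul c)).const_mul 2
    refine h.congr_deriv ?_
    simp only [hPdef, hqdef]; ring
  have hqt : (0:ℝ) < q t := hpos t ht
  have hst : (0:ℝ) < Real.sqrt (q t) := Real.sqrt_pos.mpr hqt
  have hDn : HasDerivAt (fun s => 2 * Real.sqrt (q s)) (2 * (q1 t / (2 * Real.sqrt (q t)))) t :=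
    ((hq t).sqrt (ne_of_gt hqt)).const_mul 2
  have hDnne : 2 * Real.sqrt (q t) ≠ 0 := by positivity
  have hg : HasDerivAt g
      ((2 * (P - V t * q t) * (2 * Real.sqrt (q t)) - q1 t * (2 * (q1 t / (2 * Real.sqrt (q t)))))
        / (2 * Real.sqrt (q t)) ^ 2) t := hN.div hDn hDnne
  rw [hdd, hg.deriv, hw t]
  -- algebra
  set s0 : ℝ := Real.sqrt (q t) with hs0
  have hs0sq : s0 ^ 2 = q t := Real.sq_sqrt hqt.le
  have hkey : (a * c - b ^ 2) * W ^ 2 = 1 := by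
    rw [habc]; field_simp
  have hPM : P * q t - (q1 t / 2) ^ 2 = 1 := by
    have h1 : P * q t - (q1 t / 2) ^ 2
        = (a * c - b ^ 2) * (u₁ t * deriv u₂ t - u₂ t * deriv u₁ t) ^ 2 := by
      simp only [hPdef, hqdef, hq1def]; ring
    rw [hW t, hkey] at h1
    exact h1
  have hs0ne : s0 ≠ 0 := ne_of_gt hst
  rw [← hs0sq] at hPM ⊢
  field_simp
  linear_combination 4 * hPM
end

section
/- A function f satisfying the Virasoro stabilizer equation (1/2)f''' + 2V f' + V' f = 0 has the property that the quantity (1/2)f·f'' + V·f² - (1/4)(f')² is constant in t. -/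
/-- For a solution `f` of the Virasoro stabilizer equation
`(1/2) f''' + 2 V f' + V' f = 0`, the quantity
`(1/2) f f'' + V f² - (1/4) (f')²` is constant in `t`. -/
theorem stabilizer_equation_first_integral
    (V f : ℝ → ℝ)
    (hV : Differentiable ℝ V) (hV' : Continuous (deriv V))
    (hf : Differentiable ℝ f) (hf' : Differentiable ℝ (deriv f))
    (hf'' : Differentiable ℝ (deriv (deriv f)))
    (heq : ∀ t, (1/2) * deriv (deriv (deriv f)) t + 2 * V t * deriv f t
        + deriv V t * f t = 0) :
    ∀ t, (1/2) * f t * deriv (deriv f) t + V t * f t ^ 2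
        - (1/4) * (deriv f t) ^ 2
      = (1/2) * f 0 * deriv (deriv f) 0 + V 0 * f 0 ^ 2
        - (1/4) * (deriv f 0) ^ 2 := by
  set g : ℝ → ℝ := fun t => (1/2) * f t * deriv (deriv f) t + V t * f t ^ 2
        - (1/4) * (deriv f t) ^ 2 with hg
  have key : ∀ t, HasDerivAt g 0 t := by
    intro t
    have h1 : HasDerivAt f (deriv f t) t := (hf t).hasDerivAt
    have h2 : HasDerivAt (deriv f) (deriv (deriv f) t) t := (hf' t).hasDerivAt
    have h3 : HasDerivAt (deriv (deriv f)) (deriv (deriv (deriv f)) t) t :=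
      (hf'' t).hasDerivAt
    have hVd : HasDerivAt V (deriv V t) t := (hV t).hasDerivAt
    have := (((h1.const_mul (1/2:ℝ)).mul h3).add
      (hVd.mul (h1.pow 2))).sub ((h2.pow 2).const_mul (1/4:ℝ))
    convert this using 1
    · rfl
    · rfl
    · rfl
    push_cast [Pi.pow_apply]
    linear_combination (-(f t)) * heq t
  intro t
  have : g t = g 0 := by
    have := is_const_of_deriv_eq_zero (f := g)
      (fun x => (key x).differentiableAt) (fun x => (key x).deriv) t 0
    exact this
  simpa [hg] using this
end
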